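/- arXiv:1008.4829 — 2 statements merged into one kernel-verified Lean document; each statement's English description precedes it below -/
import Mathlib

section
/- In the setup below, assume moreover that the height of Γ satisfies h ≥ t (so that x_{i_0} exists). Then Σ_{j=0}^{t-1} l_{t-j}(Δ_j∖P) ≤ l_t(Γ_0) − 1, where Γ_0 is the induced subtree of Γ rooted at x_{i_0}. -/
open scoped Classical

/-- A rooted forest on the ambient vertex type `Fin n`: a set of vertices together with a
parent function (each edge `(parent v, v)` is directed away from the roots).  The `acyclic`
field guarantees that parent chains strictly decrease some level function, so the underlying
graph is a forest in which every vertex has at most one parent. -/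
structure RootedForest (n : ℕ) where
  verts : Set (Fin n)
  par : Fin n → Option (Fin n)
  par_none : ∀ v, v ∉ verts → par v = none
  mem_left : ∀ v u, par v = some u → v ∈ verts
  mem_right : ∀ v u, par v = some u → u ∈ verts
  acyclic : ∃ lvl : Fin n → ℕ, ∀ v u, par v = some u → lvl v = lvl u + 1

/-- A rooted tree: a rooted forest with exactly one root (hence connected). -/
structure RootedTreeOn (n : ℕ) extends RootedForest n where
  root : Fin n
  root_mem : root ∈ verts
  root_par : par root = none
  root_unique : ∀ v ∈ verts, par v = none → v = root

namespace RootedForest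

variable {n : ℕ}

/-- One step of the parent function, on `Option`. -/
def parStep (F : RootedForest n) : Option (Fin n) → Option (Fin n)
  | none => none
  | some v => F.par v

/-- The level of a vertex: its distance to the root of its component, i.e. the number of
(strict) ancestors of `v`. -/
noncomputable def level (F : RootedForest n) (v : Fin n) : ℕ :=
  sInf {m : ℕ | F.parStep^[m + 1] (some v) = none}

/-- The height of a rooted forest: the maximal level of a vertex. -/
noncomputable def height (F : RootedForest n) : ℕ :=
  sSup (F.level '' F.verts)

/-- A leaf: a vertex with no children. -/
def IsLeaf (F : RootedForest n) (v : Fin n) : Prop :=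
  v ∈ F.verts ∧ ∀ u, F.par u ≠ some v

/-- An isolated vertex: a vertex incident to no edge. -/
def Isolated (F : RootedForest n) (v : Fin n) : Prop :=
  v ∈ F.verts ∧ F.par v = none ∧ ∀ u, F.par u ≠ some v

/-- `F.IsPath t p` : `p 0, p 1, …, p (t-1)` is a directed path on `t` (distinct) vertices
in `F`, each consecutive pair being a directed edge. -/
def IsPath (F : RootedForest n) (t : ℕ) (p : ℕ → Fin n) : Prop :=
  (∀ j, j < t → p j ∈ F.verts) ∧
  (∀ j, j + 1 < t → F.par (p (j + 1)) = some (p j)) ∧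
  (∀ j k, j < t → k < t → p j = p k → j = k)

/-- `F.DescOrSelf x v` : `v = x` or `v` is a descendant of `x`. -/
def DescOrSelf (F : RootedForest n) (x v : Fin n) : Prop :=
  ∃ m : ℕ, F.parStep^[m] (some v) = some x

/-- The induced subforest obtained by deleting the vertices in `W` (and all incident
edges). -/
noncomputable def delete (F : RootedForest n) (W : Set (Fin n)) : RootedForest n where
  verts := F.verts \ W
  par v :=
    if v ∈ F.verts \ W then (F.par v).bind (fun u => if u ∈ W then none else some u)
    else none
  par_none := by
    intro v hv
    simp only [if_neg hv]
  mem_left := by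
    intro v u h
    by_cases hv : v ∈ F.verts \ W
    · exact hv
    · simp only [if_neg hv] at h
      exact absurd h (by simp)
  mem_right := by
    intro v u h
    by_cases hv : v ∈ F.verts \ W
    · simp only [if_pos hv, Option.bind_eq_some_iff] at h
      obtain ⟨w, hw, hw2⟩ := h
      by_cases hwW : w ∈ W
      · simp [hwW] at hw2
      · simp only [if_neg hwW, Option.some.injEq] at hw2
        subst hw2
        exact ⟨F.mem_right v w hw, hwW⟩
    · simp only [if_neg hv] at h
      exact absurd h (by simp)
  acyclic := by
    obtain ⟨lvl, hlvl⟩ := F.acyclic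
    refine ⟨lvl, fun v u h => ?_⟩
    by_cases hv : v ∈ F.verts \ W
    · simp only [if_pos hv, Option.bind_eq_some_iff] at h
      obtain ⟨w, hw, hw2⟩ := h
      by_cases hwW : w ∈ W
      · simp [hwW] at hw2
      · simp only [if_neg hwW, Option.some.injEq] at hw2
        subst hw2
        exact hlvl v w hw
    · simp only [if_neg hv] at h
      exact absurd h (by simp)

/-- The monomials corresponding to the directed paths on `t` vertices in `F`. -/
def pathGens (k : Type*) [Field k] (F : RootedForest n) (t : ℕ) :
    Set (MvPolynomial (Fin n) k) :=
  {f | ∃ p : ℕ → Fin n, F.IsPath t p ∧ f = ∏ j ∈ Finset.range t, MvPolynomial.X (p j)}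

/-- The path ideal `I_t(F)`: the ideal of `k[x_1,…,x_n]` generated by the monomials
corresponding to the directed paths on `t` vertices in `F`. -/
noncomputable def pathIdeal (k : Type*) [Field k] (F : RootedForest n) (t : ℕ) :
    Ideal (MvPolynomial (Fin n) k) :=
  Ideal.span (F.pathGens k t)

/-- `p_t(F)`: the maximal number of pairwise vertex-disjoint directed paths on `t+1`
vertices (i.e. of length `t`) in `F`. -/
noncomputable def pDisj (F : RootedForest n) (t : ℕ) : ℕ :=
  sSup {N : ℕ | ∃ P : Fin N → (ℕ → Fin n),
    (∀ i, F.IsPath (t + 1) (P i)) ∧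
    (∀ i i', i ≠ i' → ∀ j j', j < t + 1 → j' < t + 1 → P i j ≠ P i' j')}

/-- `l_s(F)`: the number of leaves of `F` whose level is at least `s - 1`. -/
noncomputable def lCount (F : RootedForest n) (s : ℕ) : ℕ :=
  Set.ncard {v | F.IsLeaf v ∧ s - 1 ≤ F.level v}

end RootedForest

open RootedForest

/-- Vertex set of `Γ_j`, the induced subtree of `Γ` rooted at `x_{i_j}`, for `j = 0,…,t`.
Here the path is indexed so that `x_{i_{j+1}} = p j`, and `x_{i_0}` is the parent of
`x_{i_1} = p 0` when it exists (when it does not exist, this set is empty for `j = 0`). -/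
def GammaSet {n : ℕ} (Γ : RootedTreeOn n) (p : ℕ → Fin n) : ℕ → Set (Fin n)
  | 0 => {v | ∃ u, Γ.par (p 0) = some u ∧ Γ.toRootedForest.DescOrSelf u v}
  | j + 1 => {v | Γ.toRootedForest.DescOrSelf (p j) v}

/-- The set `P = {x_{i_0}, x_{i_1}, …, x_{i_t}}` (with the parent `x_{i_0}` of `x_{i_1}`
omitted when it does not exist). -/
def Pset {n : ℕ} (Γ : RootedTreeOn n) (p : ℕ → Fin n) (t : ℕ) : Set (Fin n) :=
  {v | Γ.par (p 0) = some v} ∪ {v | ∃ j, j < t ∧ p j = v}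

/-- The rooted forest `Δ_j ∖ P`, where `Δ_j = Γ_j ∖ Γ_{j+1}`. -/
noncomputable def DeltaDel {n : ℕ} (Γ : RootedTreeOn n) (p : ℕ → Fin n) (t j : ℕ) :
    RootedForest n :=
  Γ.toRootedForest.delete ((GammaSet Γ p j \ GammaSet Γ p (j + 1))ᶜ ∪ Pset Γ p t)

namespace RootedForest

variable {n : ℕ} {F : RootedForest n}

theorem aux_parStep_some (F : RootedForest n) (v : Fin n) :
    F.parStep (some v) = F.par v := rfl

theorem aux_iter_none (F : RootedForest n) (m : ℕ) : F.parStep^[m] none = none := by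
  induction m with
  | zero => rfl
  | succ k ih => rw [Function.iterate_succ_apply]; exact ih

theorem aux_iter_lvl {lvl : Fin n → ℕ}
    (hlvl : ∀ v u, F.par v = some u → lvl v = lvl u + 1) :
    ∀ (m : ℕ) (v u : Fin n), F.parStep^[m] (some v) = some u → lvl v = lvl u + m := by
  intro m
  induction m with
  | zero =>
    intro v u h
    simp only [Function.iterate_zero_apply, Option.some.injEq] at h
    subst h; rfl
  | succ k ih =>
    intro v u h
    rw [Function.iterate_succ_apply, aux_parStep_some] at h
    rcases hpar : F.par v with _ | w
    · rw [hpar, aux_iter_none] at h; cases h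
    · rw [hpar] at h
      have h1 := ih w u h
      have h2 := hlvl v w hpar
      omega

theorem aux_mem_of_iter : ∀ (m : ℕ) (v u : Fin n),
    F.parStep^[m] (some v) = some u → v ∈ F.verts → u ∈ F.verts := by
  intro m
  induction m with
  | zero =>
    intro v u h hv
    simp only [Function.iterate_zero_apply, Option.some.injEq] at h
    subst h; exact hv
  | succ k ih =>
    intro v u h hv
    rw [Function.iterate_succ_apply, aux_parStep_some] at h
    rcases hpar : F.par v with _ | w
    · rw [hpar, aux_iter_none] at h; cases h
    · rw [hpar] at h; exact ih w u h (F.mem_right v w hpar)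

theorem aux_exists_none (F : RootedForest n) (v : Fin n) :
    ∃ m : ℕ, F.parStep^[m + 1] (some v) = none := by
  obtain ⟨lvl, hlvl⟩ := F.acyclic
  by_contra hc
  push_neg at hc
  have hall : ∀ m : ℕ, ∃ u, F.parStep^[m] (some v) = some u := by
    intro m
    cases m with
    | zero => exact ⟨v, rfl⟩
    | succ k =>
      rcases h' : F.parStep^[k + 1] (some v) with _ | u
      · exact absurd h' (hc k)
      · exact ⟨u, rfl⟩
  obtain ⟨u, hu⟩ := hall (lvl v + 1)
  have := aux_iter_lvl hlvl _ _ _ hu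
  omega

theorem aux_level_ge {m : ℕ} {v u : Fin n}
    (h : F.parStep^[m] (some v) = some u) : m ≤ F.level v := by
  refine le_csInf (F.aux_exists_none v) ?_
  intro b hb
  have hb' : F.parStep^[b + 1] (some v) = none := hb
  by_contra hc
  push_neg at hc
  have hnone : F.parStep^[m] (some v) = none := by
    have hm : m = (m - (b + 1)) + (b + 1) := by omega
    rw [hm, Function.iterate_add_apply, hb', aux_iter_none]
  rw [h] at hnone; cases hnone

theorem aux_level_root (F : RootedForest n) (v : Fin n) :
    ∃ r, F.parStep^[F.level v] (some v) = some r ∧ F.par r = none := by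
  have hne := F.aux_exists_none v
  have hmem : F.parStep^[F.level v + 1] (some v) = none := Nat.sInf_mem hne
  have hsome : F.parStep^[F.level v] (some v) ≠ none := by
    cases hL : F.level v with
    | zero => simp
    | succ k =>
      intro hnone
      have hk : k ∈ {m : ℕ | F.parStep^[m + 1] (some v) = none} := hnone
      have hle : F.level v ≤ k := Nat.sInf_le hk
      omega
  rcases hr : F.parStep^[F.level v] (some v) with _ | r
  · exact absurd hr hsome
  · refine ⟨r, rfl, ?_⟩
    have h2 := hmem
    rw [Function.iterate_succ_apply', hr] at h2
    exact h2

theorem aux_delete_par {W : Set (Fin n)} {v u : Fin n}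
    (h : (F.delete W).par v = some u) :
    F.par v = some u ∧ v ∈ F.verts ∧ v ∉ W ∧ u ∉ W := by
  have h' : (if v ∈ F.verts \ W then
      (F.par v).bind (fun w => if w ∈ W then none else some w) else none) = some u := h
  by_cases hv : v ∈ F.verts \ W
  · rw [if_pos hv] at h'
    rcases hpar : F.par v with _ | w
    · rw [hpar] at h'; cases h'
    · rw [hpar] at h'
      simp only [Option.bind_some] at h'
      by_cases hw : w ∈ W
      · rw [if_pos hw] at h'; cases h'
      · rw [if_neg hw] at h'
        obtain rfl : w = u := by injection h'
        exact ⟨rfl, hv.1, hv.2, hw⟩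
  · rw [if_neg hv] at h'; cases h'

theorem aux_delete_par_of {W : Set (Fin n)} {v u : Fin n}
    (hvW : v ∉ W) (huW : u ∉ W) (h : F.par v = some u) :
    (F.delete W).par v = some u := by
  have hv : v ∈ F.verts := F.mem_left v u h
  show (if v ∈ F.verts \ W then
      (F.par v).bind (fun w => if w ∈ W then none else some w) else none) = some u
  rw [if_pos ⟨hv, hvW⟩, h]
  simp [huW]

theorem aux_delete_iter {W : Set (Fin n)} :
    ∀ (m : ℕ) (v u : Fin n), (F.delete W).parStep^[m] (some v) = some u →
      F.parStep^[m] (some v) = some u := by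
  intro m
  induction m with
  | zero => intro v u h; exact h
  | succ k ih =>
    intro v u h
    rw [Function.iterate_succ_apply] at h ⊢
    rcases hpar : (F.delete W).par v with _ | w
    · rw [aux_parStep_some, hpar, aux_iter_none] at h; cases h
    · have hd := aux_delete_par hpar
      rw [aux_parStep_some, hpar] at h
      rw [aux_parStep_some, hd.1]
      exact ih w u h

end RootedForest
/-- In the standard setup, if moreover `h ≥ t` (so that the parent
`x_{i_0}` of `x_{i_1}` exists), then `Σ_{j=0}^{t-1} l_{t-j}(Δ_j∖P) ≤ l_t(Γ_0) − 1`,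
where `Γ_0` is the induced subtree of `Γ` rooted at `x_{i_0}` (the inequality being
stated in the form `Σ + 1 ≤ l_t(Γ_0)`). -/
theorem leafCount_delta_sum_le {n t : ℕ} (ht : 2 ≤ t)
    (Γ : RootedTreeOn n) (p : ℕ → Fin n) (x0 : Fin n)
    (hht : t ≤ Γ.toRootedForest.height)
    (hp : Γ.toRootedForest.IsPath t p)
    (hleaf : Γ.toRootedForest.IsLeaf (p (t - 1)))
    (hlev : Γ.toRootedForest.level (p (t - 1)) = Γ.toRootedForest.height)
    (hx0 : Γ.par (p 0) = some x0) :
    (∑ j ∈ Finset.range t, lCount (DeltaDel Γ p t j) (t - j)) + 1 ≤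
      lCount (Γ.toRootedForest.delete ((GammaSet Γ p 0)ᶜ)) t := by
  classical
  obtain ⟨hpmem, hpedge, hpinj⟩ := hp
  -- the vertices x_{i_j} of the path, with x_{i_0} = x0
  set q : ℕ → Fin n := fun j => if j = 0 then x0 else p (j - 1) with hqdef
  have hq0 : q 0 = x0 := by simp [hqdef]
  have hqs : ∀ k, q (k + 1) = p k := by intro k; simp [hqdef]
  have hq : ∀ k, k < t → Γ.par (q (k + 1)) = some (q k) := by
    intro k hk
    cases k with
    | zero => rw [hqs, hq0]; exact hx0
    | succ k' =>
      rw [hqs, hqs]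
      exact hpedge k' hk
  have hchain : ∀ a d, a + d ≤ t →
      Γ.toRootedForest.parStep^[d] (some (q (a + d))) = some (q a) := by
    intro a d
    induction d with
    | zero => intro _; rfl
    | succ d ih =>
      intro h
      rw [show a + (d + 1) = (a + d) + 1 from rfl, Function.iterate_succ_apply,
        aux_parStep_some, hq _ (by omega)]
      exact ih (by omega)
  have hGS : ∀ (j : ℕ) (v : Fin n),
      v ∈ GammaSet Γ p j ↔ Γ.toRootedForest.DescOrSelf (q j) v := by
    intro j v
    cases j with
    | zero =>
      constructor
      · rintro ⟨u, hu, hd⟩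
        rw [hx0] at hu
        obtain rfl : x0 = u := by injection hu
        rwa [hq0]
      · intro hd
        exact ⟨x0, hx0, by rwa [hq0] at hd⟩
    | succ j =>
      rw [hqs]
      exact Iff.rfl
  have hmono : ∀ j k, j ≤ k → k ≤ t → GammaSet Γ p k ⊆ GammaSet Γ p j := by
    intro j k hjk hkt v hv
    rw [hGS] at hv ⊢
    obtain ⟨m, hm⟩ := hv
    refine ⟨(k - j) + m, ?_⟩
    rw [Function.iterate_add_apply, hm]
    have h2 := hchain j (k - j) (by omega)
    rwa [show j + (k - j) = k by omega] at h2
  have hPq : ∀ k, k ≤ t → q k ∈ Pset Γ p t := by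
    intro k hk
    cases k with
    | zero => exact Or.inl (by rw [hq0]; exact hx0)
    | succ k' => exact Or.inr ⟨k', by omega, (hqs k').symm⟩
  have hPc : ∀ v, v ∈ Pset Γ p t → ∃ k, k ≤ t ∧ v = q k := by
    intro v hv
    rcases hv with hv | ⟨k, hk, rfl⟩
    · refine ⟨0, by omega, ?_⟩
      rw [hq0]
      rw [hx0] at hv
      injection hv with h
      exact h.symm
    · exact ⟨k + 1, by omega, (hqs k).symm⟩
  have hnocycle : ∀ (v : Fin n) (m : ℕ), Γ.par x0 = some v →
      Γ.toRootedForest.parStep^[m] (some v) = some x0 → False := by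
    intro v m hpar hm
    obtain ⟨lvl, hlvl⟩ := Γ.toRootedForest.acyclic
    have h1 := hlvl _ _ hpar
    have h2 := aux_iter_lvl hlvl m v x0 hm
    omega
  -- transfer of ancestor chains ending at x0 into Γ0
  have hG : ∀ (m : ℕ) (v : Fin n), Γ.toRootedForest.parStep^[m] (some v) = some x0 →
      (Γ.toRootedForest.delete ((GammaSet Γ p 0)ᶜ)).parStep^[m] (some v) = some x0 := by
    intro m
    induction m with
    | zero => intro v h; exact h
    | succ k ih =>
      intro v h
      rw [Function.iterate_succ_apply, aux_parStep_some] at h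
      rcases hpar : Γ.par v with _ | w
      · rw [hpar, aux_iter_none] at h; cases h
      · rw [hpar] at h
        have hw := ih w h
        have hv0 : v ∈ GammaSet Γ p 0 := by
          rw [hGS, hq0]
          exact ⟨k + 1, by rw [Function.iterate_succ_apply, aux_parStep_some, hpar]; exact h⟩
        have hw0 : w ∈ GammaSet Γ p 0 := by
          rw [hGS, hq0]
          exact ⟨k, h⟩
        rw [Function.iterate_succ_apply, aux_parStep_some,
          aux_delete_par_of (W := (GammaSet Γ p 0)ᶜ) (Set.notMem_compl_iff.mpr hv0)
            (Set.notMem_compl_iff.mpr hw0) hpar]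
        exact hw
  -- unfolding membership in the vertex set of Δ_j ∖ P
  have hDv : ∀ (j : ℕ) (w : Fin n), w ∈ (DeltaDel Γ p t j).verts →
      w ∈ Γ.toRootedForest.verts ∧ w ∈ GammaSet Γ p j ∧
        w ∉ GammaSet Γ p (j + 1) ∧ w ∉ Pset Γ p t := by
    intro j w hw
    have hw' : w ∈ Γ.toRootedForest.verts \
        ((GammaSet Γ p j \ GammaSet Γ p (j + 1))ᶜ ∪ Pset Γ p t) := hw
    obtain ⟨h1, h2⟩ := hw'
    simp only [Set.mem_union, Set.mem_compl_iff, Set.mem_diff, not_or, not_not] at h2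
    exact ⟨h1, h2.1.1, h2.1.2, h2.2⟩
  -- main inclusion
  have hmain : ∀ j, j < t → ∀ v : Fin n,
      (DeltaDel Γ p t j).IsLeaf v ∧ (t - j) - 1 ≤ (DeltaDel Γ p t j).level v →
      ((Γ.toRootedForest.delete ((GammaSet Γ p 0)ᶜ)).IsLeaf v ∧
        t - 1 ≤ (Γ.toRootedForest.delete ((GammaSet Γ p 0)ᶜ)).level v) ∧
        v ∉ Pset Γ p t := by
    rintro j hj v ⟨⟨hvD, hvnoch⟩, hlevD⟩
    obtain ⟨hvV, hvGj, hvGj1, hvP⟩ := hDv j v hvD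
    have hvG0 : v ∈ GammaSet Γ p 0 := hmono 0 j (by omega) (by omega) hvGj
    have hvV0 : v ∈ (Γ.toRootedForest.delete ((GammaSet Γ p 0)ᶜ)).verts :=
      ⟨hvV, fun hc => hc hvG0⟩
    -- leaf in Γ0
    have hleaf0 : ∀ u, (Γ.toRootedForest.delete ((GammaSet Γ p 0)ᶜ)).par u ≠ some v := by
      intro u hu
      obtain ⟨hparu, huV, -, -⟩ := aux_delete_par hu
      obtain ⟨m, hm⟩ := (hGS j v).mp hvGj
      have huGj : u ∈ GammaSet Γ p j := (hGS j u).mpr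
        ⟨m + 1, by rw [Function.iterate_succ_apply, aux_parStep_some, hparu]; exact hm⟩
      have huGj1 : u ∉ GammaSet Γ p (j + 1) := by
        intro hmem
        obtain ⟨k, hk⟩ := (hGS (j + 1) u).mp hmem
        cases k with
        | zero =>
          have hu_eq : u = q (j + 1) := by
            simpa using hk
          have hpq := hq j hj
          rw [← hu_eq, hparu] at hpq
          have hvq : v = q j := by injection hpq
          exact hvP (hvq ▸ hPq j (by omega))
        | succ k' =>
          rw [Function.iterate_succ_apply, aux_parStep_some, hparu] at hk
          exact hvGj1 ((hGS (j + 1) v).mpr ⟨k', hk⟩)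
      have huP : u ∉ Pset Γ p t := by
        intro hmem
        obtain ⟨k, hk, rfl⟩ := hPc u hmem
        cases k with
        | zero =>
          obtain ⟨m0, hm0⟩ := (hGS 0 v).mp hvG0
          rw [hq0] at hm0 hparu
          exact hnocycle v m0 hparu hm0
        | succ k' =>
          have hpq := hq k' (by omega)
          rw [hparu] at hpq
          have hvq : v = q k' := by injection hpq
          exact hvP (hvq ▸ hPq k' (by omega))
      have hDedge : (DeltaDel Γ p t j).par u = some v := by
        apply aux_delete_par_of _ _ hparu
        · rintro (h | h)
          · exact h ⟨huGj, huGj1⟩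
          · exact huP h
        · rintro (h | h)
          · exact h ⟨hvGj, hvGj1⟩
          · exact hvP h
      exact hvnoch u hDedge
    -- level bound
    obtain ⟨r, hr, hrnone⟩ := aux_level_root (DeltaDel Γ p t j) v
    have hrΓ : Γ.toRootedForest.parStep^[(DeltaDel Γ p t j).level v] (some v) = some r :=
      aux_delete_iter _ _ _ hr
    have hrV : r ∈ (DeltaDel Γ p t j).verts := aux_mem_of_iter _ _ _ hr hvD
    obtain ⟨hrV', hrGj, -, hrP⟩ := hDv j r hrV
    obtain ⟨m, hm⟩ := (hGS j r).mp hrGj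
    have hm1 : m ≠ 0 := by
      intro h0
      subst h0
      have hrq : r = q j := by simpa using hm
      exact hrP (hrq ▸ hPq j (by omega))
    have hcx : Γ.toRootedForest.parStep^[j + (m + (DeltaDel Γ p t j).level v)]
        (some v) = some x0 := by
      rw [Function.iterate_add_apply, Function.iterate_add_apply, hrΓ, hm]
      have h2 := hchain 0 j (by omega)
      rwa [zero_add, hq0] at h2
    have hlow := aux_level_ge (hG _ _ hcx)
    exact ⟨⟨⟨hvV0, hleaf0⟩, by omega⟩, hvP⟩
  -- the distinguished leaf p (t-1)
  have hqt : q t = p (t - 1) := by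
    cases t with
    | zero => omega
    | succ t' => rw [hqs]; simp
  have hptP : p (t - 1) ∈ Pset Γ p t := Or.inr ⟨t - 1, by omega, rfl⟩
  have hpt : (Γ.toRootedForest.delete ((GammaSet Γ p 0)ᶜ)).IsLeaf (p (t - 1)) ∧
      t - 1 ≤ (Γ.toRootedForest.delete ((GammaSet Γ p 0)ᶜ)).level (p (t - 1)) := by
    have hchaint : Γ.toRootedForest.parStep^[t] (some (p (t - 1))) = some x0 := by
      have h2 := hchain 0 t (by omega)
      rwa [zero_add, hqt, hq0] at h2
    have hmemG0 : p (t - 1) ∈ GammaSet Γ p 0 := (hGS 0 _).mpr ⟨t, by rwa [hq0]⟩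
    refine ⟨⟨⟨hleaf.1, fun hc => hc hmemG0⟩, ?_⟩, ?_⟩
    · intro u hu
      exact hleaf.2 u (aux_delete_par hu).1
    · have := aux_level_ge (hG _ _ hchaint)
      omega
  -- counting
  set A : ℕ → Set (Fin n) := fun j =>
    {v | (DeltaDel Γ p t j).IsLeaf v ∧ (t - j) - 1 ≤ (DeltaDel Γ p t j).level v} with hA
  set B : Set (Fin n) :=
    {v | (Γ.toRootedForest.delete ((GammaSet Γ p 0)ᶜ)).IsLeaf v ∧
      t - 1 ≤ (Γ.toRootedForest.delete ((GammaSet Γ p 0)ᶜ)).level v} with hB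
  have hAB : ∀ j, j < t → A j ⊆ B \ {p (t - 1)} := by
    intro j hj v hv
    have h := hmain j hj v hv
    refine ⟨h.1, ?_⟩
    intro hveq
    have : v = p (t - 1) := hveq
    exact h.2 (this ▸ hptP)
  have hdisj : ∀ j k, j ≠ k → j < t → k < t → Disjoint (A j) (A k) := by
    have key : ∀ j k, j < k → k ≤ t → Disjoint (A j) (A k) := by
      intro j k hjk hkt
      rw [Set.disjoint_left]
      intro v hvj hvk
      have h1 := hDv j v hvj.1.1
      have h2 := hDv k v hvk.1.1
      exact h1.2.2.1 (hmono (j + 1) k (by omega) hkt h2.2.1)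
    intro j k hjk hj hk
    rcases lt_or_gt_of_ne hjk with h | h
    · exact key j k h (by omega)
    · exact (key k j h (by omega)).symm
  have hsum : ∀ s : Finset ℕ, (∀ j ∈ s, j < t) →
      (∑ j ∈ s, (A j).ncard) = (⋃ j ∈ s, A j).ncard := by
    intro s
    induction s using Finset.induction_on with
    | empty => intro _; simp
    | @insert a s' ha ih =>
      intro hbound
      rw [Finset.sum_insert ha, Finset.set_biUnion_insert,
        ih (fun j hjs => hbound j (Finset.mem_insert_of_mem hjs)),
        Set.ncard_union_eq ?_ (Set.toFinite _) (Set.toFinite _)]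
      rw [Set.disjoint_left]
      intro v hva hvU
      obtain ⟨j, hjs, hvj⟩ := Set.mem_iUnion₂.mp hvU
      exact Set.disjoint_left.mp
        (hdisj a j (fun hc => ha (hc ▸ hjs)) (hbound a (Finset.mem_insert_self a s'))
          (hbound j (Finset.mem_insert_of_mem hjs))) hva hvj
  have hUB : (⋃ j ∈ Finset.range t, A j) ⊆ B \ {p (t - 1)} := by
    intro v hv
    obtain ⟨j, hjs, hvj⟩ := Set.mem_iUnion₂.mp hv
    exact hAB j (Finset.mem_range.mp hjs) hvj
  have hcount : ∀ j, lCount (DeltaDel Γ p t j) (t - j) = (A j).ncard := fun j => rfl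
  have hBcount : lCount (Γ.toRootedForest.delete ((GammaSet Γ p 0)ᶜ)) t = B.ncard := rfl
  rw [hBcount, Finset.sum_congr rfl (fun j _ => hcount j),
    hsum (Finset.range t) (fun j hjs => Finset.mem_range.mp hjs)]
  have hle : (⋃ j ∈ Finset.range t, A j).ncard ≤ (B \ {p (t - 1)}).ncard :=
    Set.ncard_le_ncard hUB (Set.toFinite _)
  have heq : (B \ {p (t - 1)}).ncard + 1 = B.ncard :=
    Set.ncard_diff_singleton_add_one hpt (Set.toFinite _)
  omega
end

section
/- In the setup below, assume moreover that the height of Γ satisfies h ≥ t (so that x_{i_0} exists). Then p_t(Γ_0) = 1 and p_t(Γ∖Γ_0) ≤ p_t(Γ) − 1, where Γ_0 is the induced subtree of Γ rooted at x_{i_0} and Γ∖Γ_0 is the induced subforest obtained by deleting all vertices of Γ_0. -/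
open scoped Classical

namespace RootedForest

variable {n : ℕ} (F : RootedForest n)

lemma parStep_some' (v : Fin n) : F.parStep (some v) = F.par v := rfl

lemma iterate_parStep_none (m : ℕ) : F.parStep^[m] none = none := by
  induction m with
  | zero => rfl
  | succ m ih => rw [Function.iterate_succ_apply, show F.parStep none = none from rfl, ih]

lemma parStep_eventually (lvl : Fin n → ℕ)
    (hlvl : ∀ v u, F.par v = some u → lvl v = lvl u + 1) :
    ∀ k (v : Fin n), lvl v ≤ k → F.parStep^[k + 1] (some v) = none := by
  intro k
  induction k with
  | zero =>
    intro v hv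
    rw [Function.iterate_one, parStep_some']
    cases hpv : F.par v with
    | none => rfl
    | some u => have := hlvl v u hpv; omega
  | succ k ih =>
    intro v hv
    rw [Function.iterate_succ_apply, parStep_some']
    cases hpv : F.par v with
    | none => exact F.iterate_parStep_none _
    | some u =>
      have := hlvl v u hpv
      exact ih u (by omega)

lemma levelSet_nonempty (v : Fin n) :
    {m : ℕ | F.parStep^[m + 1] (some v) = none}.Nonempty := by
  obtain ⟨lvl, hlvl⟩ := F.acyclic
  exact ⟨lvl v, F.parStep_eventually lvl hlvl (lvl v) v le_rfl⟩

lemma level_spec (v : Fin n) : F.parStep^[F.level v + 1] (some v) = none :=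
  Nat.sInf_mem (F.levelSet_nonempty v)

lemma level_parent {v u : Fin n} (h : F.par v = some u) : F.level v = F.level u + 1 := by
  have h1 : F.parStep^[F.level u + 1 + 1] (some v) = none := by
    rw [Function.iterate_succ_apply, parStep_some', h]
    exact F.level_spec u
  have hle : F.level v ≤ F.level u + 1 := Nat.sInf_le h1
  have hne : F.level v ≠ 0 := by
    intro h0
    have hs := F.level_spec v
    rw [h0, Function.iterate_one, parStep_some', h] at hs
    exact Option.some_ne_none u hs
  obtain ⟨m, hm⟩ := Nat.exists_eq_succ_of_ne_zero hne
  have hs := F.level_spec v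
  rw [hm, Function.iterate_succ_apply, parStep_some', h] at hs
  have : F.level u ≤ m := Nat.sInf_le hs
  omega

lemma level_desc : ∀ (m : ℕ) (v x0 : Fin n),
    F.parStep^[m] (some v) = some x0 → F.level v = F.level x0 + m := by
  intro m
  induction m with
  | zero =>
    intro v x0 h
    simp only [Function.iterate_zero, id_eq, Option.some.injEq] at h
    rw [h]; rfl
  | succ m ih =>
    intro v x0 h
    rw [Function.iterate_succ_apply, parStep_some'] at h
    cases hpv : F.par v with
    | none => rw [hpv, F.iterate_parStep_none] at h; exact absurd h (by simp)
    | some u =>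
      rw [hpv] at h
      have := ih u x0 h
      rw [F.level_parent hpv, this]
      omega

lemma level_le_height {v : Fin n} (hv : v ∈ F.verts) : F.level v ≤ F.height := by
  obtain ⟨lvl, hlvl⟩ := F.acyclic
  have hbdd : BddAbove (F.level '' F.verts) := by
    refine ⟨Finset.univ.sup lvl, ?_⟩
    rintro x ⟨w, hw, rfl⟩
    calc F.level w ≤ lvl w :=
          Nat.sInf_le (F.parStep_eventually lvl hlvl (lvl w) w le_rfl)
      _ ≤ _ := Finset.le_sup (Finset.mem_univ w)
  exact le_csSup hbdd ⟨v, hv, rfl⟩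

lemma delete_par_def (W : Set (Fin n)) (v : Fin n) :
    (F.delete W).par v =
      if v ∈ F.verts \ W then (F.par v).bind (fun u => if u ∈ W then none else some u)
      else none := rfl

lemma delete_par_some {W : Set (Fin n)} {v u : Fin n}
    (h : (F.delete W).par v = some u) : F.par v = some u := by
  rw [delete_par_def] at h
  by_cases hv : v ∈ F.verts \ W
  · rw [if_pos hv, Option.bind_eq_some_iff] at h
    obtain ⟨w, hw, hw2⟩ := h
    by_cases hwW : w ∈ W
    · simp [hwW] at hw2
    · simp only [if_neg hwW, Option.some.injEq] at hw2
      subst hw2; exact hw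
  · rw [if_neg hv] at h; cases h

lemma delete_par_some' {W : Set (Fin n)} {v u : Fin n} (hv : v ∈ F.verts) (hvW : v ∉ W)
    (huW : u ∉ W) (h : F.par v = some u) : (F.delete W).par v = some u := by
  rw [delete_par_def, if_pos ⟨hv, hvW⟩, h]
  simp [huW]

lemma isPath_of_delete {W : Set (Fin n)} {t : ℕ} {p : ℕ → Fin n}
    (h : (F.delete W).IsPath t p) : F.IsPath t p :=
  ⟨fun j hj => (h.1 j hj).1, fun j hj => F.delete_par_some (h.2.1 j hj), h.2.2⟩

lemma path_ancestor {t : ℕ} {p : ℕ → Fin n} (hp : F.IsPath t p) :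
    ∀ j, j < t → F.parStep^[j] (some (p j)) = some (p 0) := by
  intro j
  induction j with
  | zero => intro _; rfl
  | succ j ih =>
    intro hj
    rw [Function.iterate_succ_apply, parStep_some', hp.2.1 j hj]
    exact ih (by omega)

lemma mem_pDisjSet_le (t N : ℕ)
    (h : ∃ P : Fin N → (ℕ → Fin n),
      (∀ i, F.IsPath (t + 1) (P i)) ∧
      (∀ i i', i ≠ i' → ∀ j j', j < t + 1 → j' < t + 1 → P i j ≠ P i' j')) :
    N ≤ n := by
  obtain ⟨P, _, hdisj⟩ := h
  have hinj : Function.Injective (fun i : Fin N => P i 0) := by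
    intro i i' hii
    by_contra hne
    exact hdisj i i' hne 0 0 (Nat.succ_pos t) (Nat.succ_pos t) hii
  simpa using Fintype.card_le_of_injective _ hinj

end RootedForest

open RootedForest in
/-- With `x_{i_t} = p (t-1)` a leaf at the highest level `h ≥ t` of `Γ`
(so that the parent `x0` of `x_{i_1} = p 0` exists), one has `p_t(Γ_0) = 1` and
`p_t(Γ∖Γ_0) ≤ p_t(Γ) − 1` (the latter stated as `p_t(Γ∖Γ_0) + 1 ≤ p_t(Γ)`), where `Γ_0`
is the induced subtree of `Γ` rooted at `x0`. -/
theorem pDisj_gamma0 {n t : ℕ} (ht : 2 ≤ t)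
    (Γ : RootedTreeOn n) (p : ℕ → Fin n) (x0 : Fin n)
    (hht : t ≤ Γ.toRootedForest.height)
    (hp : Γ.toRootedForest.IsPath t p)
    (hleaf : Γ.toRootedForest.IsLeaf (p (t - 1)))
    (hlev : Γ.toRootedForest.level (p (t - 1)) = Γ.toRootedForest.height)
    (hx0 : Γ.par (p 0) = some x0) :
    (Γ.toRootedForest.delete {v | ¬ Γ.toRootedForest.DescOrSelf x0 v}).pDisj t = 1 ∧
    (Γ.toRootedForest.delete {v | Γ.toRootedForest.DescOrSelf x0 v}).pDisj t + 1 ≤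
      Γ.toRootedForest.pDisj t := by
  classical
  set F := Γ.toRootedForest with hFdef
  -- ancestor facts for the path p
  have hA : ∀ j, j < t → F.parStep^[j + 1] (some (p j)) = some x0 := by
    intro j hj
    rw [Function.iterate_succ_apply', F.path_ancestor hp j hj, parStep_some']
    exact hx0
  have hlevp : ∀ j, j < t → F.level (p j) = F.level x0 + (j + 1) := by
    intro j hj
    exact F.level_desc (j + 1) (p j) x0 (hA j hj)
  have hheight : F.height = F.level x0 + t := by
    rw [← hlev]
    have h1 := hlevp (t - 1) (by omega)
    rw [h1]; omega
  -- the path q = x0, p 0, ..., p (t-1)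
  set q : ℕ → Fin n := fun j => if j = 0 then x0 else p (j - 1) with hqdef
  have hx0mem : x0 ∈ F.verts := F.mem_right _ _ hx0
  have hqmem : ∀ j, j < t + 1 → q j ∈ F.verts := by
    intro j hj
    by_cases h0 : j = 0
    · simpa [hqdef, h0] using hx0mem
    · simp only [hqdef, if_neg h0]
      exact hp.1 (j - 1) (by omega)
  have hqdesc : ∀ j, j < t + 1 → F.DescOrSelf x0 (q j) := by
    intro j hj
    by_cases h0 : j = 0
    · exact ⟨0, by simp [hqdef, h0]⟩
    · refine ⟨j, ?_⟩
      have h1 := hA (j - 1) (by omega)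
      rw [show j - 1 + 1 = j by omega] at h1
      simpa [hqdef, h0] using h1
  have hqlevel : ∀ j, j < t + 1 → F.level (q j) = F.level x0 + j := by
    intro j hj
    by_cases h0 : j = 0
    · simp [hqdef, h0]
    · have h1 := hlevp (j - 1) (by omega)
      simp only [hqdef, if_neg h0]
      rw [h1]; omega
  have hqedge : ∀ j, j + 1 < t + 1 → F.par (q (j + 1)) = some (q j) := by
    intro j hj
    by_cases h0 : j = 0
    · subst h0
      have e1 : q 1 = p 0 := by simp [hqdef]
      have e0 : q 0 = x0 := by simp [hqdef]
      rw [e1, e0]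
      exact hx0
    · simp only [hqdef, if_neg (show j + 1 ≠ 0 by omega), if_neg h0]
      have h1 := hp.2.1 (j - 1) (by omega)
      rw [show j - 1 + 1 = j by omega] at h1
      rw [show j + 1 - 1 = j by omega]
      exact h1
  have hqinj : ∀ j k, j < t + 1 → k < t + 1 → q j = q k → j = k := by
    intro j k hj hk h
    have h1 := hqlevel j hj
    have h2 := hqlevel k hk
    rw [h] at h1
    omega
  have hqpathF : F.IsPath (t + 1) q := ⟨hqmem, hqedge, hqinj⟩
  have hqpath0 : (F.delete {v | ¬ F.DescOrSelf x0 v}).IsPath (t + 1) q := by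
    refine ⟨?_, ?_, hqinj⟩
    · intro j hj
      exact ⟨hqmem j hj, fun h => h (hqdesc j hj)⟩
    · intro j hj
      exact F.delete_par_some' (hqmem (j + 1) hj) (fun h => h (hqdesc (j + 1) hj))
        (fun h => h (hqdesc j (by omega))) (hqedge j hj)
  constructor
  · -- p_t(Γ₀) = 1
    have h1mem : (1 : ℕ) ∈ {N : ℕ | ∃ P : Fin N → (ℕ → Fin n),
        (∀ i, (F.delete {v | ¬ F.DescOrSelf x0 v}).IsPath (t + 1) (P i)) ∧
        (∀ i i', i ≠ i' → ∀ j j', j < t + 1 → j' < t + 1 → P i j ≠ P i' j')} :=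
      ⟨fun _ => q, fun _ => hqpath0,
        fun i i' hii => absurd (Subsingleton.elim i i') hii⟩
    have hbound : ∀ N ∈ {N : ℕ | ∃ P : Fin N → (ℕ → Fin n),
        (∀ i, (F.delete {v | ¬ F.DescOrSelf x0 v}).IsPath (t + 1) (P i)) ∧
        (∀ i i', i ≠ i' → ∀ j j', j < t + 1 → j' < t + 1 → P i j ≠ P i' j')}, N ≤ 1 := by
      intro N hN
      by_contra hN1
      push_neg at hN1
      obtain ⟨P, hP, hdisj⟩ := hN
      have hfirst : ∀ i, P i 0 = x0 := by
        intro i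
        have hpathF : F.IsPath (t + 1) (P i) := F.isPath_of_delete (hP i)
        have hvj : ∀ j, j < t + 1 → F.DescOrSelf x0 (P i j) := by
          intro j hj
          have := ((hP i).1 j hj).2
          exact not_not.mp this
        obtain ⟨m, hm⟩ := hvj 0 (by omega)
        have hlvlt : F.level (P i t) = F.level (P i 0) + t :=
          F.level_desc t (P i t) (P i 0) (F.path_ancestor hpathF t (by omega))
        have hlvl0 : F.level (P i 0) = F.level x0 + m := F.level_desc m _ _ hm
        have hle : F.level (P i t) ≤ F.height := F.level_le_height (hpathF.1 t (by omega))
        have hm0 : m = 0 := by omega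
        rw [hm0] at hm
        simpa using hm
      have hne : (⟨0, by omega⟩ : Fin N) ≠ ⟨1, by omega⟩ := by
        intro hcon
        have := congrArg Fin.val hcon
        simp at this
      exact hdisj ⟨0, by omega⟩ ⟨1, by omega⟩ hne 0 0 (by omega) (by omega)
        (by rw [hfirst, hfirst])
    show (F.delete {v | ¬ F.DescOrSelf x0 v}).pDisj t = 1
    unfold pDisj
    exact le_antisymm (csSup_le ⟨1, h1mem⟩ hbound)
      (le_csSup ⟨1, fun x hx => hbound x hx⟩ h1mem)
  · -- p_t(Γ∖Γ₀) + 1 ≤ p_t(Γ)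
    show (F.delete {v | F.DescOrSelf x0 v}).pDisj t + 1 ≤ F.pDisj t
    unfold pDisj
    set S₁ := {N : ℕ | ∃ P : Fin N → (ℕ → Fin n),
        (∀ i, (F.delete {v | F.DescOrSelf x0 v}).IsPath (t + 1) (P i)) ∧
        (∀ i i', i ≠ i' → ∀ j j', j < t + 1 → j' < t + 1 → P i j ≠ P i' j')} with hS₁
    have h0 : (0 : ℕ) ∈ S₁ := ⟨fun i => i.elim0, fun i => i.elim0, fun i => i.elim0⟩
    have hbdd : BddAbove S₁ := ⟨n, fun N hN => (F.delete _).mem_pDisjSet_le t N hN⟩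
    have hmem := Nat.sSup_mem ⟨0, h0⟩ hbdd
    set N := sSup S₁ with hN
    obtain ⟨P, hP, hdisj⟩ := hmem
    refine le_csSup ⟨n, fun M hM => F.mem_pDisjSet_le t M hM⟩ ?_
    refine ⟨fun i => if h : (i : ℕ) < N then P ⟨i, h⟩ else q, ?_, ?_⟩
    · intro i
      by_cases h : (i : ℕ) < N
      · simp only [dif_pos h]
        exact F.isPath_of_delete (hP ⟨i, h⟩)
      · simp only [dif_neg h]
        exact hqpathF
    · intro i i' hii j j' hj hj'
      by_cases h : (i : ℕ) < N <;> by_cases h' : (i' : ℕ) < N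
      · simp only [dif_pos h, dif_pos h']
        refine hdisj ⟨i, h⟩ ⟨i', h'⟩ ?_ j j' hj hj'
        intro hcon
        rw [Fin.mk.injEq] at hcon
        exact hii (Fin.ext hcon)
      · simp only [dif_pos h, dif_neg h']
        intro hcon
        have h1 : ¬ F.DescOrSelf x0 (P ⟨i, h⟩ j) := ((hP ⟨i, h⟩).1 j hj).2
        exact h1 (hcon ▸ hqdesc j' hj')
      · simp only [dif_neg h, dif_pos h']
        intro hcon
        have h1 : ¬ F.DescOrSelf x0 (P ⟨i', h'⟩ j') := ((hP ⟨i', h'⟩).1 j' hj').2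
        exact h1 (hcon ▸ hqdesc j hj)
      · exfalso
        have hi : (i : ℕ) = N := by omega
        have hi' : (i' : ℕ) = N := by omega
        exact hii (Fin.ext (hi.trans hi'.symm))
end
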